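/- Let a ≠ b be letters and L = ({[a]}·{[b]})⁺ (nonempty repetitions of the word ab). If X, Y are languages with X·Y ⊆ L, ({[a]}·{[b]})* ⊆ X, and ({[a]}·{[b]})⁺ ⊆ Y, then X = ({[a]}·{[b]})* and Y = ({[a]}·{[b]})⁺. In particular, (({ab})*, ({ab})⁺) is a maximal local typing for the design (L, f₁ f₂). -/

import Mathlib

open Computability

lemma singleton_mul_singleton {α : Type} (a b : α) :
    (({[a]} : Language α) * {[b]}) = ({[a, b]} : Language α) := by
  ext x
  constructor
  · rintro ⟨u, hu, v, hv, rfl⟩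
    simp only [Language.mem_mul, Set.mem_singleton_iff] at *
    subst hu; subst hv; rfl
  · rintro rfl
    exact ⟨[a], rfl, [b], rfl, rfl⟩

lemma mem_kstar_singleton {α : Type} (w x : List α) :
    x ∈ ({w} : Language α)∗ ↔ ∃ n, x = (List.replicate n w).flatten := by
  rw [Language.mem_kstar]
  constructor
  · rintro ⟨L, rfl, hL⟩
    refine ⟨L.length, ?_⟩
    congr 1
    exact List.eq_replicate_length.mpr hL
  · rintro ⟨n, rfl⟩
    exact ⟨List.replicate n w, rfl, fun y hy => (List.eq_of_mem_replicate hy)⟩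

theorem maximal_local_typing_abplus {α : Type} (a b : α) (hab : a ≠ b) :
    (∀ X Y : Language α,
      X * Y ≤ (({[a]} : Language α) * {[b]}) * (({[a]} : Language α) * {[b]})∗ →
      (({[a]} : Language α) * {[b]})∗ ≤ X →
      (({[a]} : Language α) * {[b]}) * (({[a]} : Language α) * {[b]})∗ ≤ Y →
      X = (({[a]} : Language α) * {[b]})∗ ∧
      Y = (({[a]} : Language α) * {[b]}) * (({[a]} : Language α) * {[b]})∗) ∧
    (({[a]} : Language α) * {[b]})∗ *
        ((({[a]} : Language α) * {[b]}) * (({[a]} : Language α) * {[b]})∗) =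
      (({[a]} : Language α) * {[b]}) * (({[a]} : Language α) * {[b]})∗ := by
  rw [singleton_mul_singleton]
  set w : List α := [a, b] with hw
  have hplus : ∀ x : List α, x ∈ ({w} : Language α) * ({w} : Language α)∗ ↔
      ∃ n, x = (List.replicate (n + 1) w).flatten := by
    intro x
    constructor
    · rintro ⟨u, hu, v, hv, rfl⟩
      have hu : u = w := hu
      obtain ⟨n, rfl⟩ := (mem_kstar_singleton w v).mp hv
      exact ⟨n, by subst hu; simp [List.replicate_succ]⟩
    · rintro ⟨n, rfl⟩
      exact ⟨w, rfl, (List.replicate n w).flatten,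
        (mem_kstar_singleton w _).mpr ⟨n, rfl⟩, by simp [List.replicate_succ]⟩
  constructor
  · intro X Y hXY hX hY
    constructor
    · apply le_antisymm _ hX
      intro x hx
      have hab2 : w ∈ ({w} : Language α) * ({w} : Language α)∗ :=
        (hplus w).mpr ⟨0, by simp⟩
      have hxw : x ++ w ∈ ({w} : Language α) * ({w} : Language α)∗ :=
        hXY ⟨x, hx, w, hY hab2, rfl⟩
      obtain ⟨n, hn⟩ := (hplus _).mp hxw
      rw [List.replicate_succ', List.flatten_concat] at hn
      have : x = (List.replicate n w).flatten := List.append_cancel_right hn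
      exact (mem_kstar_singleton w x).mpr ⟨n, this⟩
    · apply le_antisymm _ hY
      intro y hy
      have : ([] : List α) ++ y ∈ ({w} : Language α) * ({w} : Language α)∗ :=
        hXY ⟨[], hX (Language.nil_mem_kstar _), y, hy, rfl⟩
      exact this
  · rw [← mul_assoc, Language.mul_self_kstar_comm, mul_assoc, kstar_mul_kstar]
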